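/- With the same series representation of the cone heat kernel, for fixed x, y, w, z in V one has p^V(t,x,y)/p^V(t,w,z) → v(x)v(y)/(v(w)v(z)) as t → ∞, where v(rθ) = r^{α¹-(n/2-1)} m¹(θ). -/

import Mathlib

open Filter

/-- The modified Bessel function of the first kind of order `ν`. -/
noncomputable def besselI (ν z : ℝ) : ℝ :=
  ∑' k : ℕ, (z / 2) ^ (ν + 2 * (k : ℝ)) / ((Nat.factorial k : ℝ) * Real.Gamma (ν + k + 1))

/-- The Dirichlet heat kernel of a cone with vertex `0`, in polar coordinates. -/
noncomputable def conePV (n : ℕ) {D : Type*} (α : ℕ → ℝ) (m : ℕ → D → ℝ)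
    (t r ρ : ℝ) (θ ω : D) : ℝ :=
  (1 / t) * (r * ρ) ^ (-((n : ℝ) / 2 - 1)) * Real.exp (-(r ^ 2 + ρ ^ 2) / (2 * t)) *
    ∑' i : ℕ, besselI (α i) (r * ρ / t) * m i θ * m i ω

lemma gamma_one_le (ν : ℝ) (hν : 0 ≤ ν) (k : ℕ) :
    Real.Gamma (ν + 1) ≤ Real.Gamma (ν + k + 1) := by
  induction k with
  | zero => simp
  | succ k ih =>
      have h1 : (0:ℝ) < ν + k + 1 := by positivity
      have heq : Real.Gamma (ν + (k+1:ℕ) + 1) = (ν + k + 1) * Real.Gamma (ν + k + 1) := by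
        push_cast
        rw [show (ν + ((k:ℝ) + 1) + 1) = (ν + (k:ℝ) + 1) + 1 by ring,
          Real.Gamma_add_one h1.ne']
      rw [heq]
      calc Real.Gamma (ν + 1) ≤ Real.Gamma (ν + k + 1) := ih
        _ = 1 * Real.Gamma (ν + k + 1) := by ring
        _ ≤ (ν + k + 1) * Real.Gamma (ν + k + 1) := by
            apply mul_le_mul_of_nonneg_right _ (Real.Gamma_pos_of_pos h1).le
            linarith

lemma besselI_term_eq (ν z : ℝ) (hz : 0 < z) (k : ℕ) :
    (z / 2) ^ (ν + 2 * (k : ℝ)) / ((Nat.factorial k : ℝ) * Real.Gamma (ν + k + 1))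
      = (z/2) ^ ν * (((z/2)^2)^k / ((Nat.factorial k : ℝ) * Real.Gamma (ν + k + 1))) := by
  have h2 : (0:ℝ) < z/2 := by positivity
  rw [Real.rpow_add h2, show (2 * (k:ℝ)) = ((2*k : ℕ) : ℝ) by push_cast; ring,
    Real.rpow_natCast, pow_mul]
  ring

lemma besselI_bounds (ν z : ℝ) (hν : 0 ≤ ν) (hz : 0 < z) :
    (z/2) ^ ν / Real.Gamma (ν + 1) ≤ besselI ν z ∧
    besselI ν z ≤ (z/2) ^ ν * Real.exp ((z/2)^2) / Real.Gamma (ν + 1) := by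
  have h2 : (0:ℝ) < z/2 := by positivity
  have hΓ : 0 < Real.Gamma (ν + 1) := Real.Gamma_pos_of_pos (by linarith)
  set q : ℝ := (z/2)^2 with hq
  have hq0 : 0 < q := by positivity
  set g : ℕ → ℝ := fun k => q^k / ((Nat.factorial k : ℝ) * Real.Gamma (ν + k + 1)) with hg
  have hΓk : ∀ k : ℕ, (0:ℝ) < Real.Gamma (ν + k + 1) := fun k =>
    Real.Gamma_pos_of_pos (by positivity)
  have hgpos : ∀ k, 0 < g k := fun k => by
    have := hΓk k
    have := Nat.factorial_pos k
    positivity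
  have hgle : ∀ k, g k ≤ (q^k / (Nat.factorial k : ℝ)) / Real.Gamma (ν + 1) := by
    intro k
    rw [hg, div_div]
    apply div_le_div_of_nonneg_left (by positivity) (by positivity)
    exact mul_le_mul_of_nonneg_left (gamma_one_le ν hν k) (by positivity)
  have hexp_summable : Summable (fun k : ℕ => (q^k / (Nat.factorial k : ℝ)) / Real.Gamma (ν + 1)) :=
    (Real.summable_pow_div_factorial q).div_const _
  have hgsummable : Summable g :=
    Summable.of_nonneg_of_le (fun k => (hgpos k).le) hgle hexp_summable
  have hbesselI : besselI ν z = (z/2)^ν * ∑' k, g k := by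
    rw [besselI, ← tsum_mul_left]
    exact tsum_congr fun k => besselI_term_eq ν z hz k
  have hsum_exp : ∑' k, (q^k / (Nat.factorial k : ℝ)) / Real.Gamma (ν + 1)
      = Real.exp q / Real.Gamma (ν + 1) := by
    rw [tsum_div_const]
    congr 1
    rw [Real.exp_eq_exp_ℝ, NormedSpace.exp_eq_tsum_div]
  constructor
  · rw [hbesselI]
    have h0 : g 0 = 1 / Real.Gamma (ν + 1) := by simp [hg]
    have : g 0 ≤ ∑' k, g k := hgsummable.le_tsum 0 (fun j _ => (hgpos j).le)
    rw [h0] at this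
    calc (z/2)^ν / Real.Gamma (ν+1) = (z/2)^ν * (1 / Real.Gamma (ν+1)) := by ring
      _ ≤ (z/2)^ν * ∑' k, g k := by
          apply mul_le_mul_of_nonneg_left this (Real.rpow_pos_of_pos h2 ν).le
  · rw [hbesselI]
    have : ∑' k, g k ≤ Real.exp q / Real.Gamma (ν + 1) := by
      rw [← hsum_exp]
      exact Summable.tsum_le_tsum hgle hgsummable hexp_summable
    calc (z/2)^ν * ∑' k, g k ≤ (z/2)^ν * (Real.exp q / Real.Gamma (ν+1)) := by
          apply mul_le_mul_of_nonneg_left this (Real.rpow_pos_of_pos h2 ν).le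
      _ = (z/2)^ν * Real.exp q / Real.Gamma (ν+1) := by ring

lemma core_limit {D : Type*} (α : ℕ → ℝ) (m : ℕ → D → ℝ)
    (hα0 : 0 ≤ α 0) (hαmono : Monotone α) (hα01 : α 0 < α 1)
    (Cm : ℝ) (hCm : ∀ i θ, |m i θ| ≤ Cm)
    (hK : Summable (fun i : ℕ => (2:ℝ) ^ (-α i) / Real.Gamma (α i + 1)))
    (θ ω : D)
    (hserz : ∀ z : ℝ, 0 < z → Summable (fun i : ℕ => besselI (α i) z * m i θ * m i ω)) :
    Tendsto (fun z : ℝ => (∑' i : ℕ, besselI (α i) z * m i θ * m i ω) / (z/2) ^ (α 0))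
      (nhdsWithin 0 (Set.Ioi 0)) (nhds (m 0 θ * m 0 ω / Real.Gamma (α 0 + 1))) := by
  have hΓ0 : 0 < Real.Gamma (α 0 + 1) := Real.Gamma_pos_of_pos (by linarith)
  have hΓi : ∀ i : ℕ, 0 < Real.Gamma (α i + 1) := fun i =>
    Real.Gamma_pos_of_pos (by have := hα0.trans (hαmono (Nat.zero_le i)); linarith)
  have h2pow : ∀ x : ℝ, (0:ℝ) < (2:ℝ) ^ x := fun x => Real.rpow_pos_of_pos (by norm_num) x
  have hαi0 : ∀ i, 0 ≤ α i := fun i => hα0.trans (hαmono (Nat.zero_le i))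
  have hCm0 : 0 ≤ Cm := (abs_nonneg _).trans (hCm 0 θ)
  set L : ℝ := m 0 θ * m 0 ω / Real.Gamma (α 0 + 1) with hL
  set K : ℝ := ∑' i : ℕ, (2:ℝ) ^ (-α i) / Real.Gamma (α i + 1) with hKdef
  have hK0 : 0 ≤ K := tsum_nonneg (fun i => (div_pos (h2pow _) (hΓi i)).le)
  set p : ℝ := α 1 - α 0 with hp
  have hppos : 0 < p := by simp [hp]; linarith
  set g : ℝ → ℝ := fun z => Cm^2 * (Real.exp ((z/2)^2) - 1) / Real.Gamma (α 0 + 1)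
      + Cm^2 * Real.exp ((z/2)^2) * 2 ^ (α 1) * K * (z/2) ^ p with hg
  -- g tends to 0
  have hgtendsto : Tendsto g (nhdsWithin 0 (Set.Ioi 0)) (nhds 0) := by
    have hrp : ContinuousAt (fun z : ℝ => ((z/2 : ℝ)) ^ p) 0 := by
      have h2c : ContinuousAt (fun z : ℝ => z/2) 0 := continuousAt_id.div_const 2
      have h1 : ContinuousAt (fun w : ℝ => w ^ p) ((fun z : ℝ => z/2) 0) :=
        Real.continuousAt_rpow_const _ _ (Or.inr hppos.le)
      exact ContinuousAt.comp (g := fun w : ℝ => w ^ p) (f := fun z : ℝ => z/2)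
        (x := (0:ℝ)) h1 h2c
    have hcont : ContinuousAt g 0 := by
      apply ContinuousAt.add
      · fun_prop
      · exact ContinuousAt.mul (by fun_prop) hrp
    have h0 : g 0 = 0 := by
      simp [hg, Real.zero_rpow hppos.ne']
    have := hcont.tendsto
    rw [h0] at this
    exact this.mono_left nhdsWithin_le_nhds
  -- main estimate
  have hbound : ∀ z : ℝ, z ∈ Set.Ioc (0:ℝ) 1 →
      |(∑' i : ℕ, besselI (α i) z * m i θ * m i ω) / (z/2) ^ (α 0) - L| ≤ g z := by
    intro z hz
    obtain ⟨hz0, hz1⟩ := hz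
    have h2 : (0:ℝ) < z/2 := by positivity
    have hzpow : (0:ℝ) < (z/2) ^ (α 0) := Real.rpow_pos_of_pos h2 _
    set q : ℝ := (z/2)^2 with hq
    have hq1 : 1 ≤ Real.exp q := Real.one_le_exp (by positivity)
    set a : ℕ → ℝ := fun i => besselI (α i) z * m i θ * m i ω with ha
    -- bessel bounds
    have hIbd := fun i => besselI_bounds (α i) z (hαi0 i) hz0
    have hIpos : ∀ i, 0 < besselI (α i) z := fun i =>
      lt_of_lt_of_le (div_pos (Real.rpow_pos_of_pos h2 _) (hΓi i)) (hIbd i).1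
    -- termwise bound on a i
    have habd : ∀ i : ℕ, |a i| ≤ Cm^2 * Real.exp q * ((z/2)^(α i) / Real.Gamma (α i + 1)) := by
      intro i
      rw [ha]
      calc |besselI (α i) z * m i θ * m i ω|
          = besselI (α i) z * (|m i θ| * |m i ω|) := by
            rw [abs_mul, abs_mul, abs_of_pos (hIpos i)]; ring
        _ ≤ ((z/2)^(α i) * Real.exp q / Real.Gamma (α i + 1)) * (Cm * Cm) := by
            apply mul_le_mul (hIbd i).2 _ (by positivity)
              (div_nonneg (by positivity) (hΓi i).le)
            exact mul_le_mul (hCm i θ) (hCm i ω) (abs_nonneg _) hCm0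
        _ = Cm^2 * Real.exp q * ((z/2)^(α i) / Real.Gamma (α i + 1)) := by ring
    -- weight bound for i ≥ 1
    have hwt : ∀ i : ℕ, 1 ≤ i → (z/2)^(α i) / Real.Gamma (α i + 1)
        ≤ (z/2)^(α 1) * 2^(α 1) * ((2:ℝ)^(-α i) / Real.Gamma (α i + 1)) := by
      intro i hi
      have hα1i : α 1 ≤ α i := hαmono hi
      have key : (z/2)^(α i) ≤ (z/2)^(α 1) * 2^(α 1) * (2:ℝ)^(-α i) := by
        have e1 : (z/2)^(α i) = (z/2)^(α 1) * (z/2)^(α i - α 1) := by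
          rw [← Real.rpow_add h2]; ring_nf
        have e2 : (z/2)^(α i - α 1) ≤ ((1:ℝ)/2)^(α i - α 1) :=
          Real.rpow_le_rpow h2.le (by linarith) (by linarith)
        have e3 : ((1:ℝ)/2)^(α i - α 1) = 2^(α 1) * (2:ℝ)^(-α i) := by
          rw [one_div, Real.inv_rpow (by norm_num), ← Real.rpow_neg (by norm_num),
            neg_sub, ← Real.rpow_add (by norm_num)]
          ring_nf
        calc (z/2)^(α i) = (z/2)^(α 1) * (z/2)^(α i - α 1) := e1
          _ ≤ (z/2)^(α 1) * ((1:ℝ)/2)^(α i - α 1) := by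
              apply mul_le_mul_of_nonneg_left e2 (Real.rpow_pos_of_pos h2 _).le
          _ = (z/2)^(α 1) * 2^(α 1) * (2:ℝ)^(-α i) := by rw [e3]; ring
      have hm := mul_le_mul_of_nonneg_right key (inv_nonneg.mpr (hΓi i).le)
      calc (z/2)^(α i) / Real.Gamma (α i + 1)
          = (z/2)^(α i) * (Real.Gamma (α i + 1))⁻¹ := by rw [div_eq_mul_inv]
        _ ≤ ((z/2)^(α 1) * 2^(α 1) * (2:ℝ)^(-α i)) * (Real.Gamma (α i + 1))⁻¹ := hm
        _ = (z/2)^(α 1) * 2^(α 1) * ((2:ℝ)^(-α i) / Real.Gamma (α i + 1)) := by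
            rw [div_eq_mul_inv]; ring
    -- summabilities
    have hsumwt : Summable (fun i : ℕ => Cm^2 * Real.exp q * ((z/2)^(α 1) * 2^(α 1)
        * ((2:ℝ)^(-α i) / Real.Gamma (α i + 1)))) := (hK.mul_left _).mul_left _
    have hsuma : Summable a := hserz z hz0
    have hsumabs : Summable (fun i : ℕ => |a (i+1)|) := by
      apply Summable.of_nonneg_of_le (fun i => abs_nonneg _)
        (fun i => ?_) (hsumwt.comp_injective (add_left_injective 1))
      calc |a (i+1)| ≤ Cm^2 * Real.exp q * ((z/2)^(α (i+1)) / Real.Gamma (α (i+1) + 1)) :=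
            habd (i+1)
        _ ≤ Cm^2 * Real.exp q * ((z/2)^(α 1) * 2^(α 1)
            * ((2:ℝ)^(-α (i+1)) / Real.Gamma (α (i+1) + 1))) := by
            apply mul_le_mul_of_nonneg_left (hwt (i+1) (by omega)) (by positivity)
    -- split sum
    have hsplit : (∑' i : ℕ, a i) = a 0 + ∑' i : ℕ, a (i+1) := hsuma.tsum_eq_zero_add
    -- tail bound
    have htail : |∑' i : ℕ, a (i+1)| ≤ Cm^2 * Real.exp q * ((z/2)^(α 1) * 2^(α 1) * K) := by
      have h1 : |∑' i : ℕ, a (i+1)| ≤ ∑' i : ℕ, |a (i+1)| := by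
        have := norm_tsum_le_tsum_norm (f := fun i : ℕ => a (i+1))
          (by simpa [Real.norm_eq_abs] using hsumabs)
        simpa [Real.norm_eq_abs] using this
      have h2' : ∑' i : ℕ, |a (i+1)| ≤ ∑' i : ℕ, Cm^2 * Real.exp q * ((z/2)^(α 1) * 2^(α 1)
          * ((2:ℝ)^(-α (i+1)) / Real.Gamma (α (i+1) + 1))) := by
        apply Summable.tsum_le_tsum _ hsumabs (hsumwt.comp_injective (add_left_injective 1))
        intro i
        calc |a (i+1)| ≤ Cm^2 * Real.exp q * ((z/2)^(α (i+1)) / Real.Gamma (α (i+1) + 1)) :=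
              habd (i+1)
          _ ≤ _ := by
              apply mul_le_mul_of_nonneg_left (hwt (i+1) (by omega)) (by positivity)
      have h3 : ∑' i : ℕ, Cm^2 * Real.exp q * ((z/2)^(α 1) * 2^(α 1)
          * ((2:ℝ)^(-α (i+1)) / Real.Gamma (α (i+1) + 1)))
          ≤ Cm^2 * Real.exp q * ((z/2)^(α 1) * 2^(α 1) * K) := by
        have hre : ∀ i : ℕ, Cm^2 * Real.exp q * ((z/2)^(α 1) * 2^(α 1)
            * ((2:ℝ)^(-α (i+1)) / Real.Gamma (α (i+1) + 1)))
            = (Cm^2 * Real.exp q * ((z/2)^(α 1) * 2^(α 1)))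
              * ((2:ℝ)^(-α (i+1)) / Real.Gamma (α (i+1) + 1)) := fun i => by ring
        rw [tsum_congr hre, tsum_mul_left]
        have hshift : (∑' i : ℕ, (2:ℝ)^(-α (i+1)) / Real.Gamma (α (i+1) + 1)) ≤ K := by
          rw [hKdef, hK.tsum_eq_zero_add]
          have : 0 ≤ (2:ℝ)^(-α 0) / Real.Gamma (α 0 + 1) := by positivity
          linarith
        calc (Cm^2 * Real.exp q * ((z/2)^(α 1) * 2^(α 1)))
              * (∑' i : ℕ, (2:ℝ)^(-α (i+1)) / Real.Gamma (α (i+1) + 1))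
            ≤ (Cm^2 * Real.exp q * ((z/2)^(α 1) * 2^(α 1))) * K := by
              apply mul_le_mul_of_nonneg_left hshift (by positivity)
          _ = Cm^2 * Real.exp q * ((z/2)^(α 1) * 2^(α 1) * K) := by ring
      linarith
    -- head bound
    have hhead : |a 0 - L * (z/2)^(α 0)| ≤ Cm^2 * (Real.exp q - 1) / Real.Gamma (α 0 + 1)
        * (z/2)^(α 0) := by
      have e1 : a 0 - L * (z/2)^(α 0)
          = (besselI (α 0) z - (z/2)^(α 0) / Real.Gamma (α 0 + 1)) * (m 0 θ * m 0 ω) := by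
        rw [ha, hL]; ring
      rw [e1, abs_mul]
      have hdev : |besselI (α 0) z - (z/2)^(α 0) / Real.Gamma (α 0 + 1)|
          ≤ (z/2)^(α 0) * (Real.exp q - 1) / Real.Gamma (α 0 + 1) := by
        rw [abs_le]
        constructor
        · have := (hIbd 0).1
          have hnn : 0 ≤ (z/2)^(α 0) * (Real.exp q - 1) / Real.Gamma (α 0 + 1) := by
            apply div_nonneg _ hΓ0.le
            apply mul_nonneg hzpow.le (by linarith)
          linarith
        · have := (hIbd 0).2
          have : besselI (α 0) z - (z/2)^(α 0) / Real.Gamma (α 0 + 1)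
              ≤ (z/2)^(α 0) * Real.exp q / Real.Gamma (α 0 + 1)
                - (z/2)^(α 0) / Real.Gamma (α 0 + 1) := by linarith
          calc besselI (α 0) z - (z/2)^(α 0) / Real.Gamma (α 0 + 1)
              ≤ (z/2)^(α 0) * Real.exp q / Real.Gamma (α 0 + 1)
                - (z/2)^(α 0) / Real.Gamma (α 0 + 1) := this
            _ = (z/2)^(α 0) * (Real.exp q - 1) / Real.Gamma (α 0 + 1) := by ring
      have hm : |m 0 θ * m 0 ω| ≤ Cm^2 := by
        rw [abs_mul, sq]
        exact mul_le_mul (hCm 0 θ) (hCm 0 ω) (abs_nonneg _) hCm0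
      calc |besselI (α 0) z - (z/2)^(α 0) / Real.Gamma (α 0 + 1)| * |m 0 θ * m 0 ω|
          ≤ ((z/2)^(α 0) * (Real.exp q - 1) / Real.Gamma (α 0 + 1)) * Cm^2 := by
            apply mul_le_mul hdev hm (abs_nonneg _)
            apply div_nonneg _ hΓ0.le
            apply mul_nonneg hzpow.le (by linarith)
        _ = Cm^2 * (Real.exp q - 1) / Real.Gamma (α 0 + 1) * (z/2)^(α 0) := by ring
    -- combine
    have hcomb : |(∑' i : ℕ, a i) - L * (z/2)^(α 0)|
        ≤ Cm^2 * (Real.exp q - 1) / Real.Gamma (α 0 + 1) * (z/2)^(α 0)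
          + Cm^2 * Real.exp q * ((z/2)^(α 1) * 2^(α 1) * K) := by
      rw [hsplit]
      calc |a 0 + (∑' i : ℕ, a (i+1)) - L * (z/2)^(α 0)|
          ≤ |a 0 - L * (z/2)^(α 0)| + |∑' i : ℕ, a (i+1)| := by
            rw [show a 0 + (∑' i : ℕ, a (i+1)) - L * (z/2)^(α 0)
              = (a 0 - L * (z/2)^(α 0)) + (∑' i : ℕ, a (i+1)) by ring]
            exact abs_add_le _ _
        _ ≤ _ := add_le_add hhead htail
    -- divide by (z/2)^(α 0)
    rw [show (∑' i : ℕ, besselI (α i) z * m i θ * m i ω) / (z/2) ^ (α 0) - L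
      = ((∑' i : ℕ, a i) - L * (z/2)^(α 0)) / (z/2)^(α 0) by
        field_simp; ring]
    rw [abs_div, abs_of_pos hzpow, div_le_iff₀ hzpow, hg]
    have hpowdiv : (z/2)^(α 1) = (z/2)^p * (z/2)^(α 0) := by
      rw [hp, ← Real.rpow_add h2]; ring_nf
    calc |(∑' i : ℕ, a i) - L * (z/2)^(α 0)|
        ≤ Cm^2 * (Real.exp q - 1) / Real.Gamma (α 0 + 1) * (z/2)^(α 0)
          + Cm^2 * Real.exp q * ((z/2)^(α 1) * 2^(α 1) * K) := hcomb
      _ = (Cm^2 * (Real.exp ((z/2)^2) - 1) / Real.Gamma (α 0 + 1)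
          + Cm^2 * Real.exp ((z/2)^2) * 2 ^ (α 1) * K * (z/2) ^ p) * (z/2)^(α 0) := by
          rw [hpowdiv, ← hq]; ring
  -- squeeze
  rw [tendsto_iff_dist_tendsto_zero]
  refine squeeze_zero' (Eventually.of_forall (fun z => dist_nonneg)) ?_ hgtendsto
  filter_upwards [Ioc_mem_nhdsGT_of_mem (by simp : (0:ℝ) ∈ Set.Ico (0:ℝ) 1)] with z hz
  rw [Real.dist_eq]
  exact hbound z hz


/-- for fixed `x = rθ`, `y = ρω`, `w = r'θ'`, `z = ρ'ω'` in the cone,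
`p^V(t,x,y)/p^V(t,w,z) → v(x)v(y)/(v(w)v(z))` as `t → ∞`, where
`v(rθ) = r^{α¹-(n/2-1)} m¹(θ)` (with `m¹ = m 0 > 0` on `D`). -/
theorem cone_heat_kernel_ratio_limit {D : Type*} (n : ℕ) (hn : 1 ≤ n)
    (lam : ℕ → ℝ) (m : ℕ → D → ℝ) (α : ℕ → ℝ)
    (hα : ∀ i, α i = Real.sqrt (lam i + ((n : ℝ) / 2 - 1) ^ 2))
    (hlam0 : 0 < lam 0) (hlam01 : lam 0 < lam 1) (hlammono : Monotone lam)
    (hmbdd : ∃ Cm : ℝ, ∀ i θ, |m i θ| ≤ Cm)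
    (hm0pos : ∀ θ : D, 0 < m 0 θ)
    (hsum : ∀ r ρ : ℝ, 0 < r → 0 < ρ →
      Summable (fun i : ℕ =>
        (r * ρ) ^ (α i - ((n : ℝ) / 2 - 1)) / (2 ^ (α i) * Real.Gamma (1 + α i))))
    (hser : ∀ t r ρ : ℝ, 0 < t → 0 < r → 0 < ρ → ∀ θ ω : D,
      Summable (fun i : ℕ => besselI (α i) (r * ρ / t) * m i θ * m i ω))
    (r ρ r' ρ' : ℝ) (θ ω θ' ω' : D)
    (hr : 0 < r) (hρ : 0 < ρ) (hr' : 0 < r') (hρ' : 0 < ρ') :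
    Tendsto (fun t : ℝ => conePV n α m t r ρ θ ω / conePV n α m t r' ρ' θ' ω') atTop
      (nhds ((r ^ (α 0 - ((n : ℝ) / 2 - 1)) * m 0 θ *
          (ρ ^ (α 0 - ((n : ℝ) / 2 - 1)) * m 0 ω)) /
        (r' ^ (α 0 - ((n : ℝ) / 2 - 1)) * m 0 θ' *
          (ρ' ^ (α 0 - ((n : ℝ) / 2 - 1)) * m 0 ω')))) := by
  obtain ⟨Cm, hCm⟩ := hmbdd
  set c : ℝ := (n : ℝ) / 2 - 1 with hc
  -- basic facts about α
  have hα0 : 0 ≤ α 0 := by rw [hα 0]; exact Real.sqrt_nonneg _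
  have hαmono : Monotone α := by
    intro i j hij
    rw [hα i, hα j]
    exact Real.sqrt_le_sqrt (by have := hlammono hij; linarith)
  have hα01 : α 0 < α 1 := by
    rw [hα 0, hα 1]
    exact Real.sqrt_lt_sqrt (by nlinarith [sq_nonneg c]) (by linarith)
  have hΓ0 : 0 < Real.Gamma (α 0 + 1) := Real.Gamma_pos_of_pos (by linarith)
  -- summability for K
  have hK : Summable (fun i : ℕ => (2:ℝ) ^ (-α i) / Real.Gamma (α i + 1)) := by
    have h := hsum 1 1 one_pos one_pos
    apply h.congr
    intro i
    rw [show ((1:ℝ) * 1) = 1 by norm_num, Real.one_rpow,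
      Real.rpow_neg (by norm_num : (0:ℝ) ≤ 2), add_comm (1:ℝ) (α i)]
    rw [one_div, mul_inv, div_eq_mul_inv]
  -- summability of the bessel series at each point
  have hserz : ∀ (θ₁ ω₁ : D) (z : ℝ), 0 < z →
      Summable (fun i : ℕ => besselI (α i) z * m i θ₁ * m i ω₁) := by
    intro θ₁ ω₁ z hz
    have := hser 1 z 1 one_pos hz one_pos θ₁ ω₁
    simpa using this
  -- the two core limits
  have T1 := core_limit α m hα0 hαmono hα01 Cm hCm hK θ ω (hserz θ ω)
  have T2 := core_limit α m hα0 hαmono hα01 Cm hCm hK θ' ω' (hserz θ' ω')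
  -- z(t) = r ρ / t tends to 0 within Ioi 0
  have hzfun : ∀ a b : ℝ, 0 < a → 0 < b →
      Tendsto (fun t : ℝ => a * b / t) atTop (nhdsWithin 0 (Set.Ioi 0)) := by
    intro a b ha hb
    rw [tendsto_nhdsWithin_iff]
    constructor
    · have : Tendsto (fun t : ℝ => (a * b) * t⁻¹) atTop (nhds ((a*b) * 0)) :=
        tendsto_inv_atTop_zero.const_mul _
      simpa [div_eq_mul_inv] using this
    · filter_upwards [eventually_gt_atTop (0:ℝ)] with t ht
      exact Set.mem_Ioi.mpr (by positivity)
  -- composed limits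
  have N1 : Tendsto (fun t : ℝ =>
      (∑' i : ℕ, besselI (α i) (r * ρ / t) * m i θ * m i ω) / ((r * ρ / t)/2) ^ (α 0))
      atTop (nhds (m 0 θ * m 0 ω / Real.Gamma (α 0 + 1))) :=
    T1.comp (hzfun r ρ hr hρ)
  have N2 : Tendsto (fun t : ℝ =>
      (∑' i : ℕ, besselI (α i) (r' * ρ' / t) * m i θ' * m i ω') / ((r' * ρ' / t)/2) ^ (α 0))
      atTop (nhds (m 0 θ' * m 0 ω' / Real.Gamma (α 0 + 1))) :=
    T2.comp (hzfun r' ρ' hr' hρ')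
  -- exponential factors tend to 1
  have hE : ∀ a b : ℝ, Tendsto (fun t : ℝ => Real.exp (-(a ^ 2 + b ^ 2) / (2 * t)))
      atTop (nhds 1) := by
    intro a b
    have h1 : Tendsto (fun t : ℝ => -(a ^ 2 + b ^ 2) / (2 * t)) atTop (nhds 0) := by
      have : Tendsto (fun t : ℝ => (-(a ^ 2 + b ^ 2) / 2) * t⁻¹) atTop
          (nhds ((-(a ^ 2 + b ^ 2) / 2) * 0)) := tendsto_inv_atTop_zero.const_mul _
      rw [mul_zero] at this
      apply this.congr
      intro t
      ring
    have := (Real.continuous_exp.tendsto 0).comp h1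
    simpa [Function.comp_def] using this
  -- limits of the pieces, combined
  have hL2ne : m 0 θ' * m 0 ω' / Real.Gamma (α 0 + 1) ≠ 0 := by
    have := hm0pos θ'; have := hm0pos ω'
    positivity
  set Φ : ℝ → ℝ := fun t =>
    ((r * ρ) ^ (-c) / (r' * ρ') ^ (-c))
    * (Real.exp (-(r ^ 2 + ρ ^ 2) / (2 * t)) / Real.exp (-(r' ^ 2 + ρ' ^ 2) / (2 * t)))
    * (((∑' i : ℕ, besselI (α i) (r * ρ / t) * m i θ * m i ω) / ((r * ρ / t)/2) ^ (α 0))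
        / ((∑' i : ℕ, besselI (α i) (r' * ρ' / t) * m i θ' * m i ω') / ((r' * ρ' / t)/2) ^ (α 0)))
    * ((r * ρ) / (r' * ρ')) ^ (α 0) with hΦ
  have hΦlim : Tendsto Φ atTop (nhds
      (((r * ρ) ^ (-c) / (r' * ρ') ^ (-c)) * (1 / 1)
        * ((m 0 θ * m 0 ω / Real.Gamma (α 0 + 1)) / (m 0 θ' * m 0 ω' / Real.Gamma (α 0 + 1)))
        * ((r * ρ) / (r' * ρ')) ^ (α 0))) := by
    apply Tendsto.mul_const
    apply Tendsto.mul
    · apply Tendsto.const_mul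
      exact Tendsto.div (hE r ρ) (hE r' ρ') one_ne_zero
    · exact Tendsto.div N1 N2 hL2ne
  -- eventual equality of the ratio with Φ
  have hkey : ∀ t : ℝ, 0 < t →
      conePV n α m t r ρ θ ω / conePV n α m t r' ρ' θ' ω' = Φ t := by
    intro t ht
    have hrρt : 0 < r * ρ / t := by positivity
    have hrρt' : 0 < r' * ρ' / t := by positivity
    have hP1 : (0:ℝ) < ((r * ρ / t)/2) ^ (α 0) := Real.rpow_pos_of_pos (by positivity) _
    have hP2 : (0:ℝ) < ((r' * ρ' / t)/2) ^ (α 0) := Real.rpow_pos_of_pos (by positivity) _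
    have hS1 : (∑' i : ℕ, besselI (α i) (r * ρ / t) * m i θ * m i ω)
        = ((∑' i : ℕ, besselI (α i) (r * ρ / t) * m i θ * m i ω) / ((r * ρ / t)/2) ^ (α 0))
          * ((r * ρ / t)/2) ^ (α 0) := by
      rw [div_mul_cancel₀ _ hP1.ne']
    have hS2 : (∑' i : ℕ, besselI (α i) (r' * ρ' / t) * m i θ' * m i ω')
        = ((∑' i : ℕ, besselI (α i) (r' * ρ' / t) * m i θ' * m i ω') / ((r' * ρ' / t)/2) ^ (α 0))
          * ((r' * ρ' / t)/2) ^ (α 0) := by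
      rw [div_mul_cancel₀ _ hP2.ne']
    have hPdiv : ((r * ρ / t)/2) ^ (α 0) / ((r' * ρ' / t)/2) ^ (α 0)
        = ((r * ρ) / (r' * ρ')) ^ (α 0) := by
      rw [← Real.div_rpow (by positivity) (by positivity),
        show (r * ρ / t / 2) / (r' * ρ' / t / 2) = (r * ρ) / (r' * ρ') by
          field_simp]
    have htne : (1:ℝ)/t ≠ 0 := by positivity
    have halg : ∀ A B C E F G H I J : ℝ, A ≠ 0 →
        (A * B * C * (E * F)) / (A * G * H * (I * J))
          = (B / G) * (C / H) * (E / I) * (F / J) := by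
      intro A B C E F G H I J hA
      calc (A * B * C * (E * F)) / (A * G * H * (I * J))
          = (A * (B * C * (E * F))) / (A * (G * H * (I * J))) := by ring_nf
        _ = (B * C * (E * F)) / (G * H * (I * J)) := mul_div_mul_left _ _ hA
        _ = (B / G) * (C / H) * (E / I) * (F / J) := by
            rw [div_mul_div_comm, div_mul_div_comm, div_mul_div_comm]; ring
    rw [conePV, conePV, hS1, hS2, hΦ]
    rw [halg _ _ _ _ _ _ _ _ _ htne, hPdiv]
  -- transfer the limit
  have hratio : Tendsto (fun t : ℝ => conePV n α m t r ρ θ ω / conePV n α m t r' ρ' θ' ω')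
      atTop (nhds
      (((r * ρ) ^ (-c) / (r' * ρ') ^ (-c)) * (1 / 1)
        * ((m 0 θ * m 0 ω / Real.Gamma (α 0 + 1)) / (m 0 θ' * m 0 ω' / Real.Gamma (α 0 + 1)))
        * ((r * ρ) / (r' * ρ')) ^ (α 0))) := by
    apply hΦlim.congr'
    filter_upwards [eventually_gt_atTop (0:ℝ)] with t ht
    exact (hkey t ht).symm
  -- identify the constant
  have hconst : ((r * ρ) ^ (-c) / (r' * ρ') ^ (-c)) * (1 / 1)
        * ((m 0 θ * m 0 ω / Real.Gamma (α 0 + 1)) / (m 0 θ' * m 0 ω' / Real.Gamma (α 0 + 1)))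
        * ((r * ρ) / (r' * ρ')) ^ (α 0)
      = (r ^ (α 0 - c) * m 0 θ * (ρ ^ (α 0 - c) * m 0 ω)) /
        (r' ^ (α 0 - c) * m 0 θ' * (ρ' ^ (α 0 - c) * m 0 ω')) := by
    rw [Real.div_rpow (by positivity) (by positivity),
      Real.mul_rpow hr.le hρ.le, Real.mul_rpow hr'.le hρ'.le,
      Real.mul_rpow hr.le hρ.le, Real.mul_rpow hr'.le hρ'.le,
      sub_eq_add_neg (α 0) c,
      Real.rpow_add hr, Real.rpow_add hρ, Real.rpow_add hr', Real.rpow_add hρ']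
    have e1 : (0:ℝ) < r ^ (α 0) := Real.rpow_pos_of_pos hr _
    have e2 : (0:ℝ) < ρ ^ (α 0) := Real.rpow_pos_of_pos hρ _
    have e3 : (0:ℝ) < r' ^ (α 0) := Real.rpow_pos_of_pos hr' _
    have e4 : (0:ℝ) < ρ' ^ (α 0) := Real.rpow_pos_of_pos hρ' _
    have f1 : (0:ℝ) < r ^ (-c) := Real.rpow_pos_of_pos hr _
    have f2 : (0:ℝ) < ρ ^ (-c) := Real.rpow_pos_of_pos hρ _
    have f3 : (0:ℝ) < r' ^ (-c) := Real.rpow_pos_of_pos hr' _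
    have f4 : (0:ℝ) < ρ' ^ (-c) := Real.rpow_pos_of_pos hρ' _
    have g1 := hm0pos θ'; have g2 := hm0pos ω'
    field_simp
  rw [← hconst]
  exact hratio
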